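/- Let f be holomorphic on the open unit disk 𝔻 and suppose f is not affine, i.e., its derivative f′ is not constant on 𝔻. Then the mean value function M(r) = (π r²)⁻¹ ∫_{D(r)} |f′(z)|² dA(z) is strictly increasing on (0,1). (For general holomorphic f, M is nondecreasing on (0,1).) -/

import Mathlib

open MeasureTheory Metric Set Filter
open scoped Real Topology NNReal ENNReal

private lemma intTheta (k : ℤ) (hk : k ≠ 0) :
    ∫ θ in Ioo (-π) π, Complex.exp (k * θ * Complex.I) = 0 := by
  have hle : (-π : ℝ) ≤ π := by linarith [Real.pi_pos]
  have h1 : ∫ θ in Ioo (-π) π, Complex.exp (k * θ * Complex.I)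
      = ∫ θ in (-π)..π, Complex.exp ((k * Complex.I) * θ) := by
    rw [intervalIntegral.integral_of_le hle, ← integral_Ioc_eq_integral_Ioo]
    congr 1; ext θ; ring_nf
  have hc : (k : ℂ) * Complex.I ≠ 0 := by
    simp [Complex.I_ne_zero, hk]
  rw [h1, integral_exp_mul_complex hc]
  have h2 : Complex.exp (k * Complex.I * π) = Complex.exp (k * Complex.I * ↑(-π)) := by
    have h3 : Complex.exp (k * Complex.I * π)
        = Complex.exp ((k:ℂ) * (2*π) * Complex.I) * Complex.exp (k * Complex.I * ↑(-π)) := by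
      rw [← Complex.exp_add]; congr 1; push_cast; ring
    have h4 : Complex.exp ((k:ℂ) * (2*π) * Complex.I) = 1 := by
      have := Complex.exp_int_mul_two_pi_mul_I k
      rw [← this]; congr 1; push_cast; ring
    rw [h3, h4, one_mul]
  rw [h2, sub_self, zero_div]

private lemma orth (r : ℝ) (hr : 0 < r) (n m : ℕ) :
    ∫ z in ball (0:ℂ) r, z ^ n * (starRingEnd ℂ z) ^ m =
      if n = m then ((π * r ^ (2 * n + 2) / (n + 1) : ℝ) : ℂ) else 0 := by
  classical
  set F : ℂ → ℂ := indicator (ball (0:ℂ) r) (fun z => z ^ n * (starRingEnd ℂ z) ^ m) with hF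
  have key : ∫ z in ball (0:ℂ) r, z ^ n * (starRingEnd ℂ z) ^ m = ∫ z, F z := by
    rw [hF, integral_indicator measurableSet_ball]
  rw [key, ← Complex.integral_comp_polarCoord_symm F, polarCoord_target]
  set f₁ : ℝ → ℂ := indicator (Ioo 0 r) (fun x => (x:ℂ) ^ (n + m + 1)) with hf₁
  set f₂ : ℝ → ℂ := fun θ => Complex.exp ((n - m : ℤ) * θ * Complex.I) with hf₂
  have congr1 : ∫ p in Ioi (0:ℝ) ×ˢ Ioo (-π) π, p.1 • F (Complex.polarCoord.symm p)
      = ∫ p in Ioi (0:ℝ) ×ˢ Ioo (-π) π, f₁ p.1 * f₂ p.2 := by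
    apply setIntegral_congr_fun (by measurability)
    rintro ⟨ρ, θ⟩ ⟨hρ, hθ⟩
    simp only [mem_Ioi] at hρ
    have hsym : Complex.polarCoord.symm (ρ, θ) = ρ * Complex.exp (θ * Complex.I) := by
      rw [Complex.polarCoord_symm_apply, Complex.exp_mul_I]
      push_cast; ring
    have habs : ‖Complex.polarCoord.symm (ρ, θ)‖ = ρ := by
      rw [hsym, norm_mul, Complex.norm_exp_ofReal_mul_I, mul_one, Complex.norm_real,
        Real.norm_eq_abs, abs_of_pos hρ]
    by_cases hcase : ρ < r
    · have hmem : Complex.polarCoord.symm (ρ, θ) ∈ ball (0:ℂ) r := by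
        rw [mem_ball_zero_iff, habs]; exact hcase
      have hmem1 : ρ ∈ Ioo (0:ℝ) r := ⟨hρ, hcase⟩
      simp only [hF, hf₁, hf₂, indicator_of_mem hmem, indicator_of_mem hmem1]
      rw [hsym]
      have hconj : (starRingEnd ℂ) ((ρ:ℂ) * Complex.exp (θ * Complex.I))
          = ρ * Complex.exp (-(θ * Complex.I)) := by
        rw [map_mul, Complex.conj_ofReal, ← Complex.exp_conj]
        congr 2
        simp [Complex.conj_ofReal]
      rw [hconj]
      rw [mul_pow, mul_pow, ← Complex.exp_nat_mul, ← Complex.exp_nat_mul,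
        Complex.real_smul]
      push_cast
      rw [show ((ρ:ℂ)) * ((ρ:ℂ)^n * Complex.exp ((n:ℂ)*((θ:ℂ)*Complex.I)) *
          ((ρ:ℂ)^m * Complex.exp ((m:ℂ) * -((θ:ℂ)*Complex.I))))
          = (ρ:ℂ)^(n+m+1) * (Complex.exp ((n:ℂ)*((θ:ℂ)*Complex.I)) *
            Complex.exp ((m:ℂ) * -((θ:ℂ)*Complex.I))) by ring, ← Complex.exp_add]
      congr 1
      ring
    · have hmem : Complex.polarCoord.symm (ρ, θ) ∉ ball (0:ℂ) r := by
        rw [mem_ball_zero_iff, habs]; exact hcase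
      have hmem1 : ρ ∉ Ioo (0:ℝ) r := fun h => hcase h.2
      simp only [hF, hf₁, hf₂, indicator_of_notMem hmem, indicator_of_notMem hmem1,
        smul_zero, zero_mul]
  rw [congr1, MeasureTheory.Measure.volume_eq_prod ℝ ℝ, setIntegral_prod_mul]
  by_cases hnm : n = m
  · subst hnm
    rw [if_pos rfl]
    have h2 : ∫ θ in Ioo (-π) π, f₂ θ = ((2 * π : ℝ) : ℂ) := by
      have : ∀ θ : ℝ, f₂ θ = 1 := by
        intro θ; simp [hf₂]
      simp only [this]
      rw [setIntegral_const, measureReal_def, Real.volume_Ioo,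
        ENNReal.toReal_ofReal (by linarith [Real.pi_pos]), Complex.real_smul, mul_one]
      push_cast; ring
    have h1 : ∫ x in Ioi (0:ℝ), f₁ x = ((r ^ (2*n+2) / (2*n+2) : ℝ) : ℂ) := by
      rw [hf₁, setIntegral_indicator measurableSet_Ioo,
        inter_eq_self_of_subset_right Ioo_subset_Ioi_self]
      have : ∀ x : ℝ, (x:ℂ) ^ (n + n + 1) = ((x ^ (n+n+1) : ℝ) : ℂ) := by
        intro x; push_cast; ring
      simp only [this]
      rw [← integral_Ioc_eq_integral_Ioo, ← intervalIntegral.integral_of_le hr.le,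
        intervalIntegral.integral_ofReal]
      norm_cast
      rw [integral_pow]
      have h0 : (0:ℝ) ^ (n + n + 1 + 1) = 0 := zero_pow (by omega)
      rw [h0]
      push_cast
      ring_nf
    rw [h1, h2, ← Complex.ofReal_mul, Complex.ofReal_inj]
    have hn1 : (2*(n:ℝ)+2) ≠ 0 := by positivity
    field_simp
  · rw [if_neg hnm]
    have hk : ((n:ℤ) - m) ≠ 0 := by
      omega
    have h2 : ∫ θ in Ioo (-π) π, f₂ θ = 0 := intTheta _ hk
    rw [h2, mul_zero]

private lemma finite_integral (r : ℝ) (hr : 0 < r) (a : ℕ → ℂ) (N : ℕ) :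
    ∫ z in ball (0:ℂ) r, ‖∑ n ∈ Finset.range N, a n * z ^ n‖^2
      = ∑ n ∈ Finset.range N, ‖a n‖^2 * (π * r^(2*n+2) / (n+1)) := by
  have hInt : ∀ h : ℂ → ℂ, Continuous h → IntegrableOn h (ball (0:ℂ) r) := fun h hc =>
    (hc.continuousOn.integrableOn_compact (isCompact_closedBall 0 r)).mono_set
      ball_subset_closedBall
  set S : ℂ → ℂ := fun z => ∑ n ∈ Finset.range N, a n * z ^ n with hS
  have hScont : Continuous S := by fun_prop
  have hterm : ∀ n m : ℕ, Continuous fun z : ℂ =>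
      (a n * starRingEnd ℂ (a m)) * (z ^ n * (starRingEnd ℂ z) ^ m) := by
    intro n m
    exact continuous_const.mul ((continuous_pow n).mul (Complex.continuous_conj.pow m))
  have expand : ∀ z : ℂ, S z * starRingEnd ℂ (S z)
      = ∑ n ∈ Finset.range N, ∑ m ∈ Finset.range N,
          (a n * starRingEnd ℂ (a m)) * (z ^ n * (starRingEnd ℂ z) ^ m) := by
    intro z
    rw [hS]; simp only [map_sum, map_mul, map_pow, Finset.sum_mul_sum]
    exact Finset.sum_congr rfl fun n _ => Finset.sum_congr rfl fun m _ => by ring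
  have Ic : ∫ z in ball (0:ℂ) r, S z * starRingEnd ℂ (S z)
      = ((∑ n ∈ Finset.range N, ‖a n‖^2 * (π * r^(2*n+2) / (n+1)) : ℝ) : ℂ) := by
    simp only [expand]
    rw [integral_finset_sum _ (fun n _ => integrable_finset_sum _
      (fun m _ => hInt _ (hterm n m)))]
    have hswap : ∀ n : ℕ, ∫ z in ball (0:ℂ) r, ∑ m ∈ Finset.range N,
        (a n * starRingEnd ℂ (a m)) * (z ^ n * (starRingEnd ℂ z) ^ m)
        = ∑ m ∈ Finset.range N, (a n * starRingEnd ℂ (a m))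
            * ∫ z in ball (0:ℂ) r, z ^ n * (starRingEnd ℂ z) ^ m := by
      intro n
      rw [integral_finset_sum _ (fun m _ => hInt _ (hterm n m))]
      exact Finset.sum_congr rfl fun m _ => integral_const_mul _ _
    simp only [hswap, orth r hr]
    push_cast
    refine Finset.sum_congr rfl fun n hn => ?_
    rw [Finset.sum_eq_single n]
    · rw [if_pos rfl, Complex.mul_conj]
      push_cast [Complex.normSq_eq_norm_sq]
      ring
    · intro m _ hmn
      rw [if_neg (fun h => hmn h.symm), mul_zero]
    · intro hnn; exact absurd hn hnn
  have hre : ∀ z : ℂ, ‖S z‖^2 = (S z * starRingEnd ℂ (S z)).re := by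
    intro z
    rw [Complex.mul_conj, Complex.ofReal_re, Complex.sq_norm]
  rw [show (fun z => ‖∑ n ∈ Finset.range N, a n * z ^ n‖^2)
      = fun z => (S z * starRingEnd ℂ (S z)).re from funext hre]
  have h2 := integral_re (μ := volume.restrict (ball (0:ℂ) r))
      (f := fun z => S z * starRingEnd ℂ (S z))
      (hInt _ (hScont.mul (Complex.continuous_conj.comp hScont)))
  simp only [RCLike.re_eq_complex_re] at h2
  rw [h2, Ic, Complex.ofReal_re]

private lemma mean_hasSum (g : ℂ → ℂ) (p : FormalMultilinearSeries ℂ ℂ ℂ) (R : ℝ≥0)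
    (hp : HasFPowerSeriesOnBall g p 0 R) {r : ℝ} (hr0 : 0 < r) (hr1 : r < R) :
    HasSum (fun n => ‖p.coeff n‖^2 * (π * r^(2*n+2) / (n+1)))
      (∫ z in ball (0:ℂ) r, ‖g z‖^2) := by
  set a : ℕ → ℂ := fun n => p.coeff n with ha
  have hR0 : (0:ℝ) ≤ (R:ℝ) := R.2
  set r' : ℝ≥0 := ⟨(r+R)/2, by linarith⟩ with hr'
  have hrr' : r < (r' : ℝ) := by show r < (r+R)/2; linarith
  have hr'1 : (r' : ℝ) < R := by show (r+R)/2 < R; linarith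
  have hrad : (r' : ℝ≥0∞) < p.radius := by
    refine lt_of_lt_of_le ?_ hp.r_le
    exact_mod_cast (by exact_mod_cast hr'1 : r' < R)
  have hsum : Summable (fun n => ‖p n‖ * (r':ℝ)^n) := p.summable_norm_mul_pow hrad
  set C : ℝ := ∑' n, ‖p n‖ * (r':ℝ)^n with hC
  have hpt : ∀ z ∈ ball (0:ℂ) r, Tendsto
      (fun N => ∑ n ∈ Finset.range N, a n * z^n) atTop (𝓝 (g z)) := by
    intro z hz
    rw [mem_ball_zero_iff] at hz
    have hz1 : z ∈ Metric.eball (0:ℂ) (R:ℝ≥0∞) := by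
      rw [Metric.mem_eball, edist_zero_right]
      exact_mod_cast (show ‖z‖₊ < R by exact_mod_cast hz.trans hr1)
    have h := (hp.hasSum hz1).tendsto_sum_nat
    rw [zero_add] at h
    convert h using 2 with N
    refine Finset.sum_congr rfl fun n _ => ?_
    rw [FormalMultilinearSeries.apply_eq_pow_smul_coeff, smul_eq_mul, ha, mul_comm]
  have hbound : ∀ N : ℕ, ∀ z ∈ ball (0:ℂ) r,
      ‖∑ n ∈ Finset.range N, a n * z^n‖^2 ≤ C^2 := by
    intro N z hz
    rw [mem_ball_zero_iff] at hz
    have h1 : ‖∑ n ∈ Finset.range N, a n * z^n‖ ≤ C := by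
      refine (norm_sum_le _ _).trans ?_
      refine le_trans (Finset.sum_le_sum (fun n _ => ?_)) (Summable.sum_le_tsum _
        (fun n _ => mul_nonneg (norm_nonneg _) (pow_nonneg r'.2 n)) hsum)
      rw [norm_mul, norm_pow, FormalMultilinearSeries.norm_apply_eq_norm_coef]
      exact mul_le_mul_of_nonneg_left
        (pow_le_pow_left₀ (norm_nonneg z) (hz.trans hrr').le n) (norm_nonneg _)
    exact pow_le_pow_left₀ (norm_nonneg _) h1 2
  have hDCT : Tendsto
      (fun N => ∫ z in ball (0:ℂ) r, ‖∑ n ∈ Finset.range N, a n * z^n‖^2)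
      atTop (𝓝 (∫ z in ball (0:ℂ) r, ‖g z‖^2)) := by
    haveI : IsFiniteMeasure (volume.restrict (ball (0:ℂ) r)) :=
      ⟨by rw [Measure.restrict_apply_univ]; exact measure_ball_lt_top⟩
    refine tendsto_integral_of_dominated_convergence (fun _ => C^2) ?_ ?_ ?_ ?_
    · intro N
      exact ((continuous_norm.comp (by fun_prop)).pow 2).aestronglyMeasurable
    · exact integrable_const _
    · intro N
      refine (ae_restrict_iff' measurableSet_ball).2 (Eventually.of_forall fun z hz => ?_)
      rw [Real.norm_eq_abs, abs_of_nonneg (by positivity)]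
      exact hbound N z hz
    · refine (ae_restrict_iff' measurableSet_ball).2 (Eventually.of_forall fun z hz => ?_)
      exact ((continuous_norm.tendsto (g z)).comp (hpt z hz)).pow 2
  simp only [finite_integral r hr0 a] at hDCT
  exact (hasSum_iff_tendsto_nat_of_nonneg (fun n => by positivity) _).2 hDCT

/-- For `f` holomorphic on the unit disk, the mean value function
`M(r) = (π r²)⁻¹ ∫_{D(r)} |f′|² dA` is nondecreasing on `(0,1)`, and strictly
increasing when the derivative `f′` is not constant on the disk. -/
theorem mean_value_monotone
    (f : ℂ → ℂ) (hf : DifferentiableOn ℂ f (ball (0:ℂ) 1))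
    (M : ℝ → ℝ)
    (hM : ∀ r : ℝ, M r = (π * r^2)⁻¹ *
      ∫ z in ball (0:ℂ) r, ‖deriv f z‖^2) :
    MonotoneOn M (Ioo (0:ℝ) 1) ∧
    ((¬ ∃ c : ℂ, ∀ z ∈ ball (0:ℂ) 1, deriv f z = c) →
      StrictMonoOn M (Ioo (0:ℝ) 1)) := by
  have hfa : AnalyticOnNhd ℂ f (ball (0:ℂ) 1) := hf.analyticOnNhd isOpen_ball
  have hg : DifferentiableOn ℂ (deriv f) (ball (0:ℂ) 1) := hfa.deriv.differentiableOn
  set p := cauchyPowerSeries (deriv f) 0 ((1/2 : ℝ≥0) : ℝ) with hpdef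
  have hp0 : HasFPowerSeriesOnBall (deriv f) p 0 (1/2 : ℝ≥0) := by
    refine DifferentiableOn.hasFPowerSeriesOnBall (hg.mono ?_) (by norm_num)
    exact closedBall_subset_ball (by norm_num)
  have hpR : ∀ R : ℝ≥0, 0 < R → (R:ℝ) < 1 → HasFPowerSeriesOnBall (deriv f) p 0 R := by
    intro R hR0 hR1
    have hq := DifferentiableOn.hasFPowerSeriesOnBall
      (hg.mono (closedBall_subset_ball hR1)) hR0
    have heq := hq.hasFPowerSeriesAt.eq_formalMultilinearSeries hp0.hasFPowerSeriesAt
    rwa [heq] at hq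
  set a : ℕ → ℂ := fun n => p.coeff n with ha
  set c : ℕ → ℝ := fun n => ‖a n‖^2 / (n+1) with hc
  have hMsum : ∀ r ∈ Ioo (0:ℝ) 1, HasSum (fun n => c n * r^(2*n)) (M r) := by
    intro r hr
    set R : ℝ≥0 := ⟨(r+1)/2, by linarith [hr.1]⟩ with hR
    have hcR : (R:ℝ) = (r+1)/2 := rfl
    have hp' := hpR R (by rw [← NNReal.coe_pos, hcR]; linarith [hr.1])
      (by rw [hcR]; linarith [hr.2])
    have h := (mean_hasSum (deriv f) p R hp' hr.1
      (by rw [hcR]; linarith [hr.2])).mul_left (π * r^2)⁻¹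
    rw [← hM r] at h
    have heq : (fun n => c n * r^(2*n))
        = fun n => (π * r^2)⁻¹ * (‖p.coeff n‖^2 * (π * r^(2*n+2) / (n+1))) := by
      funext n
      have hπ : (π:ℝ) ≠ 0 := Real.pi_ne_zero
      have hrne : r ≠ 0 := ne_of_gt hr.1
      have hn1 : ((n:ℝ)+1) ≠ 0 := by positivity
      have hpow : r ^ (2*n+2) = r^(2*n) * r^2 := by rw [pow_add]
      rw [hc, hpow]
      field_simp
      ring
    rw [heq]
    exact h
  have hcnonneg : ∀ n, 0 ≤ c n := fun n => by rw [hc]; positivity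
  have hmono : MonotoneOn M (Ioo (0:ℝ) 1) := by
    intro x hx y hy hxy
    exact hasSum_le (fun n => mul_le_mul_of_nonneg_left
      (pow_le_pow_left₀ hx.1.le hxy _) (hcnonneg n)) (hMsum x hx) (hMsum y hy)
  refine ⟨hmono, fun hnc => ?_⟩
  have hex : ∃ k, 1 ≤ k ∧ a k ≠ 0 := by
    by_contra hcon
    push_neg at hcon
    refine hnc ⟨a 0, fun z hz => ?_⟩
    rw [mem_ball_zero_iff] at hz
    have hz0 : (0:ℝ) ≤ ‖z‖ := norm_nonneg z
    set R : ℝ≥0 := ⟨(‖z‖+1)/2, by linarith⟩ with hR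
    have hcR : (R:ℝ) = (‖z‖+1)/2 := rfl
    have hp' := hpR R (by rw [← NNReal.coe_pos, hcR]; linarith) (by rw [hcR]; linarith)
    have hz1 : z ∈ Metric.eball (0:ℂ) (R:ℝ≥0∞) := by
      rw [Metric.mem_eball, edist_zero_right]
      exact_mod_cast (show ‖z‖₊ < R by
        rw [← NNReal.coe_lt_coe, coe_nnnorm, hcR]; linarith)
    have hsum := hp'.hasSum hz1
    rw [zero_add] at hsum
    have h0 : (fun n => p n fun _ => z) = fun n => if n = 0 then a 0 else 0 := by
      funext n
      rw [FormalMultilinearSeries.apply_eq_pow_smul_coeff, smul_eq_mul]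
      rcases Nat.eq_zero_or_pos n with h | h
      · simp [h, ha]
      · rw [show p.coeff n = a n from rfl, hcon n h, mul_zero, if_neg (by omega)]
    rw [h0] at hsum
    exact hsum.unique (hasSum_ite_eq 0 (a 0))
  obtain ⟨k, hk1, hak⟩ := hex
  intro x hx y hy hxy
  have h1 := hMsum x hx
  have h2 := hMsum y hy
  have hck : 0 < c k := by
    have : 0 < ‖a k‖ := norm_pos_iff.2 hak
    rw [hc]; positivity
  have hpow : x^(2*k) < y^(2*k) := pow_lt_pow_left₀ hxy hx.1.le (by omega)
  have key : M x + c k * (y^(2*k) - x^(2*k)) ≤ M y := by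
    refine hasSum_le (fun n => ?_)
      (h1.add (hasSum_ite_eq k (c k * (y^(2*k) - x^(2*k))))) h2
    by_cases hn : n = k
    · subst hn; rw [if_pos rfl]
      exact le_of_eq (by ring)
    · rw [if_neg hn, add_zero]
      exact mul_le_mul_of_nonneg_left (pow_le_pow_left₀ hx.1.le hxy.le _) (hcnonneg n)
  nlinarith [mul_pos hck (sub_pos.2 hpow)]
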